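/- Let W ∈ ℝ^{n×n} be a mixing matrix with mixing rate α ∈ [0,1), let L > 0, and let f_1, …, f_n : ℝ^d → ℝ be differentiable with L-Lipschitz gradients. Let x, x', s ∈ ℝ^{nd} with blocks x_i, x'_i, s_i and block averages x̄, x̄', s̄, let ∇F(x) ∈ ℝ^{nd} denote the stacked vector whose i-th block is ∇f_i(x_i), and set s' = (W ⊗ I_d)·(s + ∇F(x) − ∇F(x')) with block average s̄'. Then ‖s' − 1_n ⊗ s̄'‖₂² ≤ (2α²/(1+α²))·‖s − 1_n ⊗ s̄‖₂² + (2α²/(1−α²))·(2L²·‖x − 1_n ⊗ x̄‖₂² + 2L²·‖x' − 1_n ⊗ x̄'‖₂² + n·L²·‖x̄ − x̄'‖₂²). -/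

import Mathlib

open Finset

noncomputable section

/-- `ℝ^d` as a Euclidean space. -/
abbrev Vec (d : ℕ) := EuclideanSpace ℝ (Fin d)

/-- `ℝ^{nd}` as a stack of `n` blocks in `ℝ^d`, with the Euclidean (ℓ₂) norm. -/
abbrev Stacked (n d : ℕ) := PiLp 2 (fun _ : Fin n => Vec d)

/-- Block average `x̄ = (1/n) Σᵢ xᵢ` of a stacked vector. -/
def blockAvg {n d : ℕ} (x : Stacked n d) : Vec d := (n : ℝ)⁻¹ • ∑ i, x i

/-- The stacked vector `1ₙ ⊗ y` whose every block equals `y`. -/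
def stack (n : ℕ) {d : ℕ} (y : Vec d) : Stacked n d := WithLp.toLp 2 (fun _ => y)

/-- Action of `W ⊗ I_d` on a stacked vector. -/
def kronApply {n d : ℕ} (W : Matrix (Fin n) (Fin n) ℝ) (x : Stacked n d) : Stacked n d :=
  WithLp.toLp 2 (fun i => ∑ j, W i j • x j)

/-- A mixing matrix: `W·1ₙ = 1ₙ` and `Wᵀ·1ₙ = 1ₙ`. -/
def IsMixing {n : ℕ} (W : Matrix (Fin n) (Fin n) ℝ) : Prop :=
  W.mulVec (fun _ => 1) = (fun _ => 1) ∧ Matrix.vecMul (fun _ => 1) W = (fun _ => 1)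

/-- The mixing rate `α = ‖W − (1/n)1ₙ1ₙᵀ‖_op` (ℓ₂ operator norm). -/
def mixingRate {n : ℕ} (W : Matrix (Fin n) (Fin n) ℝ) : ℝ :=
  ‖LinearMap.toContinuousLinearMap
    (Matrix.toEuclideanLin (W - (n : ℝ)⁻¹ • Matrix.of fun _ _ => (1 : ℝ)))‖

/-- The distributed gradient `∇F(x)`, whose `i`-th block is `∇fᵢ(xᵢ)`. -/
def gradStack {n d : ℕ} (f : Fin n → Vec d → ℝ) (x : Stacked n d) : Stacked n d :=
  WithLp.toLp 2 (fun i => gradient (f i) (x i))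

namespace TCEaux

variable {n d : ℕ}

lemma norm_sq_stacked (v : Stacked n d) : ‖v‖ ^ 2 = ∑ i, ‖v i‖ ^ 2 :=
  PiLp.norm_sq_eq_of_L2 _ v

lemma stack_norm_sq (y : Vec d) : ‖stack n y‖ ^ 2 = n * ‖y‖ ^ 2 := by
  rw [norm_sq_stacked]; simp [stack, mul_comm]

lemma sum_center (hn : n ≠ 0) (v : Stacked n d) :
    ∑ i, (v i - blockAvg v) = 0 := by
  have h1 : ∑ _i : Fin n, blockAvg v = (n : ℝ) • blockAvg v := by
    rw [Finset.sum_const, card_univ, Fintype.card_fin, ← Nat.cast_smul_eq_nsmul ℝ]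
  rw [Finset.sum_sub_distrib, h1, blockAvg, smul_smul,
    mul_inv_cancel₀ (by exact_mod_cast hn : (n : ℝ) ≠ 0), one_smul, sub_self]

lemma inner_center_stack (hn : n ≠ 0) (v : Stacked n d) (y : Vec d) :
    (inner ℝ (v - stack n (blockAvg v)) (stack n y) : ℝ) = 0 := by
  rw [PiLp.inner_apply]
  have h : ∀ i : Fin n, (inner ℝ ((v - stack n (blockAvg v)) i) ((stack n y : Stacked n d) i) : ℝ)
      = inner ℝ (v i - blockAvg v) y := fun i => rfl
  simp_rw [h]
  rw [← sum_inner, sum_center hn v, inner_zero_left]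

lemma norm_sq_decomp (hn : n ≠ 0) (v : Stacked n d) :
    ‖v‖ ^ 2 = ‖v - stack n (blockAvg v)‖ ^ 2 + n * ‖blockAvg v‖ ^ 2 := by
  have h : v = (v - stack n (blockAvg v)) + stack n (blockAvg v) := by abel
  calc ‖v‖ ^ 2 = ‖(v - stack n (blockAvg v)) + stack n (blockAvg v)‖ ^ 2 := by rw [← h]
    _ = _ := by
        rw [norm_add_sq_real, inner_center_stack hn, stack_norm_sq]; ring

lemma kron_norm_le (M : Matrix (Fin n) (Fin n) ℝ) (v : Stacked n d) :
    ‖kronApply M v‖ ≤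
      ‖LinearMap.toContinuousLinearMap (Matrix.toEuclideanLin M)‖ * ‖v‖ := by
  set C := ‖LinearMap.toContinuousLinearMap (Matrix.toEuclideanLin M)‖ with hC
  have hC0 : 0 ≤ C := norm_nonneg _
  have hsq : ‖kronApply M v‖ ^ 2 ≤ C ^ 2 * ‖v‖ ^ 2 := by
    have hv : ‖v‖ ^ 2 = ∑ k : Fin d, ∑ j, (v j k) ^ 2 := by
      rw [norm_sq_stacked]
      rw [Finset.sum_comm]
      refine Finset.sum_congr rfl fun j _ => ?_
      rw [PiLp.norm_sq_eq_of_L2]; simp [sq_abs]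
    have hL : ‖kronApply M v‖ ^ 2 = ∑ k : Fin d, ∑ i, (∑ j, M i j * v j k) ^ 2 := by
      rw [norm_sq_stacked, Finset.sum_comm]
      refine Finset.sum_congr rfl fun i _ => ?_
      rw [PiLp.norm_sq_eq_of_L2]
      refine Finset.sum_congr rfl fun k _ => ?_
      have : (kronApply M v i) k = ∑ j, M i j * v j k := by
        simp [kronApply]
      rw [this, Real.norm_eq_abs, sq_abs]
    rw [hL, hv, Finset.mul_sum]
    refine Finset.sum_le_sum fun k _ => ?_
    set w : EuclideanSpace ℝ (Fin n) := (WithLp.equiv 2 (Fin n → ℝ)).symm (fun j => v j k) with hw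
    have h1 : ∑ i, (∑ j, M i j * v j k) ^ 2 = ‖Matrix.toEuclideanLin M w‖ ^ 2 := by
      rw [PiLp.norm_sq_eq_of_L2]
      refine Finset.sum_congr rfl fun i _ => ?_
      have : (Matrix.toEuclideanLin M w) i = ∑ j, M i j * v j k := by
        simp [Matrix.toEuclideanLin_apply, Matrix.mulVec, dotProduct, hw]
      rw [this, Real.norm_eq_abs, sq_abs]
    have h2 : ‖w‖ ^ 2 = ∑ j, (v j k) ^ 2 := by
      rw [PiLp.norm_sq_eq_of_L2]; simp [hw, sq_abs]
    rw [h1, ← h2]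
    have h3 : ‖Matrix.toEuclideanLin M w‖ ≤ C * ‖w‖ := by
      exact (LinearMap.toContinuousLinearMap (Matrix.toEuclideanLin M)).le_opNorm w
    calc ‖Matrix.toEuclideanLin M w‖ ^ 2 ≤ (C * ‖w‖) ^ 2 :=
          pow_le_pow_left₀ (norm_nonneg _) h3 2
      _ = C ^ 2 * ‖w‖ ^ 2 := by ring
  have := Real.sqrt_le_sqrt hsq
  rwa [Real.sqrt_sq (norm_nonneg _), show C ^ 2 * ‖v‖ ^ 2 = (C * ‖v‖) ^ 2 by ring,
    Real.sqrt_sq (mul_nonneg hC0 (norm_nonneg _))] at this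

lemma blockAvg_kron {W : Matrix (Fin n) (Fin n) ℝ}
    (hcol : Matrix.vecMul (fun _ => 1) W = fun _ => 1) (u : Stacked n d) :
    blockAvg (kronApply W u) = blockAvg u := by
  unfold blockAvg
  congr 1
  show ∑ i, (∑ j, W i j • u j : Vec d) = ∑ i, u i
  rw [Finset.sum_comm]
  refine Finset.sum_congr rfl fun j _ => ?_
  rw [← Finset.sum_smul]
  have h : ∑ i, W i j = 1 := by
    have := congrFun hcol j; simpa [Matrix.vecMul, dotProduct] using this
  rw [h, one_smul]

lemma key_identity (hn : n ≠ 0) {W : Matrix (Fin n) (Fin n) ℝ} (hW : IsMixing W)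
    (u : Stacked n d) :
    kronApply W u - stack n (blockAvg (kronApply W u)) =
      kronApply (W - (n : ℝ)⁻¹ • Matrix.of fun _ _ => (1 : ℝ))
        (u - stack n (blockAvg u)) := by
  refine PiLp.ext fun i => ?_
  show kronApply W u i - blockAvg (kronApply W u) =
    ∑ j, (W i j - (n : ℝ)⁻¹ * 1) • (u j - blockAvg u)
  rw [blockAvg_kron hW.2]
  have hrow : ∑ j, W i j = 1 := by
    have := congrFun hW.1 i; simpa [Matrix.mulVec, dotProduct] using this
  have eA : ∑ j, W i j • blockAvg u = blockAvg u := by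
    rw [← Finset.sum_smul, hrow, one_smul]
  have eB : ∑ j : Fin n, (n : ℝ)⁻¹ • u j = blockAvg u := by
    rw [← Finset.smul_sum]; rfl
  have eC : ∑ _j : Fin n, (n : ℝ)⁻¹ • blockAvg u = blockAvg u := by
    rw [Finset.sum_const, card_univ, Fintype.card_fin, ← Nat.cast_smul_eq_nsmul ℝ,
      smul_smul, mul_inv_cancel₀ (by exact_mod_cast hn : (n : ℝ) ≠ 0), one_smul]
  have e1 : ∑ j, (W i j - (n : ℝ)⁻¹ * 1) • (u j - blockAvg u)
      = (∑ j, W i j • u j - ∑ j, W i j • blockAvg u)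
        - (∑ j : Fin n, (n : ℝ)⁻¹ • u j - ∑ _j : Fin n, (n : ℝ)⁻¹ • blockAvg u) := by
    simp only [mul_one, sub_smul, smul_sub, Finset.sum_sub_distrib]
    abel
  rw [e1, eA, eB, eC]
  show (∑ j, W i j • u j) - blockAvg u = _
  abel

lemma sq_le_two_sq_add_two_sq {a b c : ℝ} (ha : 0 ≤ a) (h : a ≤ b + c) :
    a ^ 2 ≤ 2 * b ^ 2 + 2 * c ^ 2 := by
  nlinarith [sq_nonneg (b - c), sq_nonneg (b + c)]

lemma young (t A B : ℝ) (ht0 : 0 ≤ t) (ht1 : t < 1) :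
    t * (A + B) ^ 2 ≤ 2 * t / (1 + t) * A ^ 2 + 2 * t / (1 - t) * B ^ 2 := by
  have h1 : (0 : ℝ) < 1 + t := by linarith
  have h2 : (0 : ℝ) < 1 - t := by linarith
  rw [div_mul_eq_mul_div, div_mul_eq_mul_div,
    div_add_div _ _ (ne_of_gt h1) (ne_of_gt h2), le_div_iff₀ (mul_pos h1 h2)]
  nlinarith [mul_nonneg ht0 (sq_nonneg ((1 - t) * A - (1 + t) * B))]

end TCEaux

set_option maxHeartbeats 1600000 in
open TCEaux in
/-- Gradient-tracking consensus error: with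
`s' = (W ⊗ I_d)(s + ∇F(x) − ∇F(x'))`,
`‖s' − 1ₙ⊗s̄'‖² ≤ (2α²/(1+α²))‖s − 1ₙ⊗s̄‖²
  + (2α²/(1−α²))(2L²‖x − 1ₙ⊗x̄‖² + 2L²‖x' − 1ₙ⊗x̄'‖² + nL²‖x̄ − x̄'‖²)`. -/
theorem tracking_consensus_error_step {n d : ℕ} (W : Matrix (Fin n) (Fin n) ℝ) (α : ℝ)
    (hW : IsMixing W) (hα : α = mixingRate W) (hα1 : α ∈ Set.Ico (0 : ℝ) 1)
    (L : ℝ) (hL : 0 < L)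
    (f : Fin n → Vec d → ℝ) (hdiff : ∀ i, Differentiable ℝ (f i))
    (hlip : ∀ i, ∀ x y : Vec d, ‖gradient (f i) x - gradient (f i) y‖ ≤ L * ‖x - y‖)
    (x x' s : Stacked n d) (s' : Stacked n d)
    (hs' : s' = kronApply W (s + gradStack f x - gradStack f x')) :
    ‖s' - stack n (blockAvg s')‖ ^ 2 ≤
      (2 * α ^ 2 / (1 + α ^ 2)) * ‖s - stack n (blockAvg s)‖ ^ 2
      + (2 * α ^ 2 / (1 - α ^ 2)) *
          (2 * L ^ 2 * ‖x - stack n (blockAvg x)‖ ^ 2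
           + 2 * L ^ 2 * ‖x' - stack n (blockAvg x')‖ ^ 2
           + n * L ^ 2 * ‖blockAvg x - blockAvg x'‖ ^ 2) := by
  obtain ⟨hα0, hαlt⟩ := hα1
  have ht0 : 0 ≤ α ^ 2 := sq_nonneg α
  have ht1 : α ^ 2 < 1 := by nlinarith
  rcases Nat.eq_zero_or_pos n with hn0 | hnpos
  · subst hn0
    have hz : ∀ v : Stacked 0 d, ‖v‖ = 0 := by
      intro v
      have : ‖v‖ ^ 2 = 0 := by rw [norm_sq_stacked]; simp
      nlinarith [norm_nonneg v]
    have hb : ∀ v : Stacked 0 d, blockAvg v = 0 := by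
      intro v; simp [blockAvg]
    simp [hz, hb]
  have hn : n ≠ 0 := by omega
  set g : Stacked n d := gradStack f x - gradStack f x' with hg
  set u : Stacked n d := s + gradStack f x - gradStack f x' with hu
  have hug : u = s + g := by rw [hu, hg]; abel
  -- Step 1: key identity and operator bound
  have hkey : s' - stack n (blockAvg s') =
      kronApply (W - (n : ℝ)⁻¹ • Matrix.of fun _ _ => (1 : ℝ))
        (u - stack n (blockAvg u)) := by
    rw [hs']; exact key_identity hn hW u
  have hop : ‖s' - stack n (blockAvg s')‖ ≤ α * ‖u - stack n (blockAvg u)‖ := by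
    rw [hkey, hα, mixingRate]
    exact kron_norm_le _ _
  -- Step 2: decomposition of u − 1⊗ū
  set A := ‖s - stack n (blockAvg s)‖ with hA
  set B := ‖g - stack n (blockAvg g)‖ with hB
  have hdecomp : u - stack n (blockAvg u) =
      (s - stack n (blockAvg s)) + (g - stack n (blockAvg g)) := by
    rw [hug]
    have havg : blockAvg (s + g) = blockAvg s + blockAvg g := by
      unfold blockAvg
      rw [← smul_add, ← Finset.sum_add_distrib]
      rfl
    have hstack : stack n (blockAvg (s + g)) =
        stack n (blockAvg s) + stack n (blockAvg g) := by
      rw [havg]; exact PiLp.ext fun i => by simp [stack]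
    rw [hstack]; abel
  have hAB : ‖u - stack n (blockAvg u)‖ ≤ A + B := by
    rw [hdecomp]; exact norm_add_le _ _
  have h5 : ‖s' - stack n (blockAvg s')‖ ^ 2 ≤ α ^ 2 * (A + B) ^ 2 := by
    have h : ‖s' - stack n (blockAvg s')‖ ≤ α * (A + B) :=
      hop.trans (mul_le_mul_of_nonneg_left hAB hα0)
    calc ‖s' - stack n (blockAvg s')‖ ^ 2 ≤ (α * (A + B)) ^ 2 :=
          pow_le_pow_left₀ (norm_nonneg _) h 2
      _ = α ^ 2 * (A + B) ^ 2 := by ring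
  -- Step 3: Young
  have h6 : α ^ 2 * (A + B) ^ 2 ≤
      2 * α ^ 2 / (1 + α ^ 2) * A ^ 2 + 2 * α ^ 2 / (1 - α ^ 2) * B ^ 2 :=
    young (α ^ 2) A B ht0 ht1
  -- Step 4: bound B²
  have hBg : B ^ 2 ≤ ‖g‖ ^ 2 := by
    have hdec := norm_sq_decomp hn g
    rw [hB]
    have hnn : (0 : ℝ) ≤ (n : ℝ) * ‖blockAvg g‖ ^ 2 :=
      mul_nonneg (Nat.cast_nonneg n) (sq_nonneg _)
    linarith
  have hgx : ‖g‖ ^ 2 ≤ L ^ 2 * ‖x - x'‖ ^ 2 := by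
    rw [norm_sq_stacked, norm_sq_stacked, Finset.mul_sum]
    refine Finset.sum_le_sum fun i _ => ?_
    have h := hlip i (x i) (x' i)
    have h' : ‖g i‖ ≤ L * ‖(x - x') i‖ := by simpa [hg, gradStack] using h
    calc ‖g i‖ ^ 2 ≤ (L * ‖(x - x') i‖) ^ 2 := pow_le_pow_left₀ (norm_nonneg _) h' 2
      _ = L ^ 2 * ‖(x - x') i‖ ^ 2 := by ring
  -- orthogonal decomposition of x − x'
  have hxx' : x - x' = ((x - stack n (blockAvg x)) - (x' - stack n (blockAvg x')))
      + stack n (blockAvg x - blockAvg x') := by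
    have h0 : stack n (blockAvg x - blockAvg x') =
        stack n (blockAvg x) - stack n (blockAvg x') := PiLp.ext fun i => by simp [stack]
    rw [h0]; abel
  have hinner : (inner ℝ ((x - stack n (blockAvg x)) - (x' - stack n (blockAvg x')))
      (stack n (blockAvg x - blockAvg x')) : ℝ) = 0 := by
    rw [inner_sub_left, inner_center_stack hn, inner_center_stack hn, sub_zero]
  have hxsq : ‖x - x'‖ ^ 2 =
      ‖(x - stack n (blockAvg x)) - (x' - stack n (blockAvg x'))‖ ^ 2
      + n * ‖blockAvg x - blockAvg x'‖ ^ 2 := by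
    rw [hxx', norm_add_sq_real, hinner, stack_norm_sq]; ring
  have hasq : ‖(x - stack n (blockAvg x)) - (x' - stack n (blockAvg x'))‖ ^ 2 ≤
      2 * ‖x - stack n (blockAvg x)‖ ^ 2 + 2 * ‖x' - stack n (blockAvg x')‖ ^ 2 := by
    exact sq_le_two_sq_add_two_sq (norm_nonneg _)
      (norm_sub_le (x - stack n (blockAvg x)) (x' - stack n (blockAvg x')))
  have h7 : B ^ 2 ≤ 2 * L ^ 2 * ‖x - stack n (blockAvg x)‖ ^ 2
      + 2 * L ^ 2 * ‖x' - stack n (blockAvg x')‖ ^ 2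
      + n * L ^ 2 * ‖blockAvg x - blockAvg x'‖ ^ 2 := by
    have h71 : ‖x - x'‖ ^ 2 ≤ 2 * ‖x - stack n (blockAvg x)‖ ^ 2
        + 2 * ‖x' - stack n (blockAvg x')‖ ^ 2
        + n * ‖blockAvg x - blockAvg x'‖ ^ 2 := by
      rw [hxsq]; linarith
    have h72 := mul_le_mul_of_nonneg_left h71 (sq_nonneg L)
    calc B ^ 2 ≤ ‖g‖ ^ 2 := hBg
      _ ≤ L ^ 2 * ‖x - x'‖ ^ 2 := hgx
      _ ≤ L ^ 2 * (2 * ‖x - stack n (blockAvg x)‖ ^ 2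
            + 2 * ‖x' - stack n (blockAvg x')‖ ^ 2
            + n * ‖blockAvg x - blockAvg x'‖ ^ 2) := h72
      _ = _ := by ring
  have hc2 : 0 ≤ 2 * α ^ 2 / (1 - α ^ 2) :=
    div_nonneg (by nlinarith) (by nlinarith)
  have h8 := mul_le_mul_of_nonneg_left h7 hc2
  linarith [h5, h6, h8]

end
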